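/- Let a and b be positive integers with gcd(a,b) = 1, and let λ be a complex number with λ ≠ 0, λ^a ≠ 1 and λ^b ≠ 1. Then ∑_{n ∈ NR(a,b)} λⁿ n = λ/(λ − 1)² + a b λ^{a b}/((λ^a − 1)(λ^b − 1)) − (λ^{a b} − 1)((a + b)λ^{a+b} − a λ^a − b λ^b) / ((λ^a − 1)²(λ^b − 1)²). -/

import Mathlib

set_option maxHeartbeats 1000000

open Finset


private lemma wss_small {a b n : ℕ} (hb : 0 < b) (h : ∃ x y : ℕ, n = a * x + b * y) :
    ∃ x, x < b ∧ ∃ y, n = a * x + b * y := by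
  obtain ⟨x, y, rfl⟩ := h
  refine ⟨x % b, Nat.mod_lt _ hb, y + a * (x / b), ?_⟩
  have := Nat.mod_add_div x b
  calc a * x + b * y = a * (x % b + b * (x / b)) + b * y := by rw [this]
    _ = a * (x % b) + b * (y + a * (x / b)) := by ring

private lemma wss_big {a b : ℕ} (ha : 0 < a) (hb : 0 < b) (hgcd : Nat.gcd a b = 1)
    {n : ℕ} (hn : a * b ≤ n) : ∃ x y : ℕ, n = a * x + b * y := by
  haveI : NeZero b := ⟨hb.ne'⟩
  have hu : IsUnit (a : ZMod b) := (ZMod.isUnit_iff_coprime a b).mpr hgcd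
  set u : ZMod b := (n : ZMod b) * (a : ZMod b)⁻¹ with hu_def
  set x := u.val with hx_def
  have hxb : x < b := ZMod.val_lt u
  have hax : ((a * x : ℕ) : ZMod b) = (n : ZMod b) := by
    push_cast
    rw [hx_def, ZMod.natCast_zmod_val, hu_def, mul_comm ((n : ZMod b)) _, ← mul_assoc,
      mul_comm (a : ZMod b) _, ZMod.inv_mul_of_unit _ hu, one_mul]
  have hmod : a * x ≡ n [MOD b] := (ZMod.natCast_eq_natCast_iff _ _ _).mp hax
  have hle : a * x ≤ n := by
    have : a * x < a * b := by
      exact mul_lt_mul_of_pos_left hxb ha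
    omega
  obtain ⟨y, hy⟩ := (Nat.modEq_iff_dvd' hle).mp hmod
  exact ⟨x, y, by omega⟩

private lemma wss_inj {a b : ℕ} (hgcd : Nat.gcd a b = 1) {x x' y y' : ℕ}
    (hx : x < b) (hx' : x' < b) (h : a * x + b * y = a * x' + b * y') :
    x = x' ∧ y = y' := by
  have h1 : a * x ≡ a * x' [MOD b] := by
    have e1 : (a * x) % b = (a * x + b * y) % b := (Nat.add_mul_mod_self_left _ _ _).symm
    have e2 : (a * x') % b = (a * x' + b * y') % b := (Nat.add_mul_mod_self_left _ _ _).symm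
    unfold Nat.ModEq
    rw [e1, e2, h]
  have h2 : x ≡ x' [MOD b] := Nat.ModEq.cancel_left_of_coprime (by rwa [Nat.gcd_comm] at hgcd) h1
  have hxx : x = x' := by
    have := h2
    unfold Nat.ModEq at this
    rwa [Nat.mod_eq_of_lt hx, Nat.mod_eq_of_lt hx'] at this
  subst hxx
  refine ⟨rfl, ?_⟩
  have hb' : b * y = b * y' := by omega
  rcases Nat.eq_zero_or_pos b with h0 | h0
  · omega
  · exact Nat.eq_of_mul_eq_mul_left h0 hb'


open Classical in
private noncomputable def NRF (a b : ℕ) : Finset ℕ :=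
  (range (a*b)).filter (fun n => 0 < n ∧ ¬ ∃ x y : ℕ, n = a * x + b * y)

private lemma wss_comb {a b : ℕ} (ha : 0 < a) (hb : 0 < b) (hgcd : Nat.gcd a b = 1)
    (f : ℕ → ℂ) :
    ∑ x ∈ range b, ∑ y ∈ range a, f (a*x+b*y)
      = ∑ r ∈ range (a*b), f r + ∑ n ∈ NRF a b, (f (n + a*b) - f n) := by
  classical
  have hsmall : ∀ {n : ℕ}, (∃ x y : ℕ, n = a * x + b * y) → ∃ x, x < b ∧ ∃ y, n = a * x + b * y :=
    fun h => wss_small hb h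
  have hc : b * a = a * b := Nat.mul_comm b a
  -- split the double sum
  rw [← Finset.sum_product']
  set D := range b ×ˢ range a with hD
  rw [← Finset.sum_filter_add_sum_filter_not D (fun p => a * p.1 + b * p.2 < a * b)]
  have hmemD : ∀ p : ℕ × ℕ, p ∈ D ↔ p.1 < b ∧ p.2 < a := by
    intro p; simp [hD, Finset.mem_product]
  have part1 : ∑ p ∈ D.filter (fun p => a * p.1 + b * p.2 < a * b), f (a * p.1 + b * p.2)
      = ∑ r ∈ (range (a*b)).filter (fun n => ∃ x y : ℕ, n = a * x + b * y), f r := by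
    refine Finset.sum_bij (fun p _ => a * p.1 + b * p.2) ?_ ?_ ?_ ?_
    · intro p hp
      rw [Finset.mem_filter] at hp ⊢
      rw [Finset.mem_range]
      exact ⟨hp.2, ⟨p.1, p.2, rfl⟩⟩
    · intro p hp q hq hpq
      rw [Finset.mem_filter, hmemD] at hp hq
      have := wss_inj hgcd hp.1.1 hq.1.1 hpq
      exact Prod.ext this.1 this.2
    · intro r hr
      rw [Finset.mem_filter, Finset.mem_range] at hr
      obtain ⟨x, hx, y, rfl⟩ := hsmall hr.2
      have hy : y < a := by
        have : b * y < b * a := by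
          calc b * y ≤ a * x + b * y := Nat.le_add_left _ _
            _ < a * b := hr.1
            _ = b * a := (Nat.mul_comm a b)
        exact Nat.lt_of_mul_lt_mul_left this
      exact ⟨(x, y), by rw [Finset.mem_filter, hmemD]; exact ⟨⟨hx, hy⟩, hr.1⟩, rfl⟩
    · intro p hp; rfl
  have part2 : ∑ p ∈ D.filter (fun p => ¬ (a * p.1 + b * p.2 < a * b)), f (a * p.1 + b * p.2)
      = ∑ n ∈ NRF a b, f (n + a*b) := by
    refine Finset.sum_bij (fun p _ => a * p.1 + b * p.2 - a * b) ?_ ?_ ?_ ?_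
    · intro p hp
      rw [Finset.mem_filter, hmemD] at hp
      obtain ⟨⟨hx, hy⟩, hge⟩ := hp
      push_neg at hge
      have h1 : a * (p.1+1) ≤ a * b := Nat.mul_le_mul_left a hx
      have h2 : b * (p.2+1) ≤ b * a := Nat.mul_le_mul_left b hy
      rw [Nat.mul_succ] at h1 h2
      have hne : a * p.1 + b * p.2 ≠ a * b := by
        intro he
        have he' : a * p.1 + b * p.2 = a * 0 + b * a := by omega
        have := wss_inj hgcd hx hb he'
        omega
      unfold NRF
      rw [Finset.mem_filter, Finset.mem_range]
      refine ⟨by omega, by omega, ?_⟩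
      rintro ⟨x', y', hrep⟩
      obtain ⟨x'', hx'', y'', hrep'⟩ := hsmall ⟨x', y', hrep⟩
      have he' : a * p.1 + b * p.2 = a * x'' + b * (y'' + a) := by
        rw [Nat.mul_add, hc]; omega
      have := wss_inj hgcd hx hx'' he'
      omega
    · intro p hp q hq hpq
      rw [Finset.mem_filter, hmemD] at hp hq
      have h1 : ¬ (a * p.1 + b * p.2 < a * b) := hp.2
      have h2 : ¬ (a * q.1 + b * q.2 < a * b) := hq.2
      have : a * p.1 + b * p.2 = a * q.1 + b * q.2 := by omega
      have := wss_inj hgcd hp.1.1 hq.1.1 this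
      exact Prod.ext this.1 this.2
    · intro n hn
      unfold NRF at hn
      rw [Finset.mem_filter, Finset.mem_range] at hn
      obtain ⟨hlt, hpos, hnrep⟩ := hn
      have : ∃ x y : ℕ, n + a*b = a * x + b * y := wss_big ha hb hgcd (Nat.le_add_left _ _)
      obtain ⟨x, hx, y, hxy⟩ := hsmall this
      have hy : y < a := by
        by_contra hy
        push_neg at hy
        obtain ⟨y'', rfl⟩ := Nat.exists_eq_add_of_le hy
        exact hnrep ⟨x, y'', by rw [Nat.mul_add, hc] at hxy; omega⟩
      refine ⟨(x, y), ?_, show a * x + b * y - a * b = n by omega⟩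
      rw [Finset.mem_filter, hmemD]
      exact ⟨⟨hx, hy⟩, show ¬ a * x + b * y < a * b by omega⟩
    · intro p hp
      rw [Finset.mem_filter] at hp
      have := hp.2
      congr 1
      omega
  rw [part1, part2]
  have split : ∑ r ∈ range (a*b), f r
      = ∑ r ∈ (range (a*b)).filter (fun n => ∃ x y : ℕ, n = a * x + b * y), f r
        + ∑ n ∈ NRF a b, f n := by
    rw [← Finset.sum_filter_add_sum_filter_not (range (a*b)) (fun n => ∃ x y : ℕ, n = a * x + b * y)]
    congr 1
    apply Finset.sum_congr _ (fun _ _ => rfl)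
    unfold NRF
    apply Finset.filter_congr
    intro n hn
    constructor
    · intro h
      have h0 : 0 < n := by
        rcases Nat.eq_zero_or_pos n with h0 | h0
        · exact absurd ⟨0, 0, by omega⟩ (h0 ▸ h)
        · exact h0
      exact ⟨h0, h⟩
    · exact fun h => h.2
  rw [split, Finset.sum_sub_distrib]
  ring
private lemma wss_wgeom (x : ℂ) (n : ℕ) :
    (∑ i ∈ Finset.range n, (i:ℂ) * x ^ i) * (x - 1)^2
      = ((n:ℂ) - 1) * x^(n+1) - (n:ℂ) * x^n + x := by
  induction n with
  | zero => simp
  | succ n ih =>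
    rw [Finset.sum_range_succ, add_mul, ih]
    push_cast
    ring

private lemma wss_key {a b : ℕ} (ha : 0 < a) (hb : 0 < b) (hgcd : Nat.gcd a b = 1)
    (μ : ℂ) (hA : μ ^ a ≠ 1) (hB : μ ^ b ≠ 1) (hC : μ ^ (a*b) ≠ 1) :
    ∑ n ∈ NRF a b, μ ^ n * (n : ℂ) =
      μ / (μ - 1) ^ 2
        + (a : ℂ) * (b : ℂ) * μ ^ (a * b) / ((μ ^ a - 1) * (μ ^ b - 1))
        - (μ ^ (a * b) - 1) *
            (((a : ℂ) + (b : ℂ)) * μ ^ (a + b) - (a : ℂ) * μ ^ a - (b : ℂ) * μ ^ b) /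
            ((μ ^ a - 1) ^ 2 * (μ ^ b - 1) ^ 2) := by
  have hμ : μ ≠ 1 := by rintro rfl; exact hA (one_pow a)
  have hμ1 : μ - 1 ≠ 0 := sub_ne_zero.mpr hμ
  have hA1 : μ ^ a - 1 ≠ 0 := sub_ne_zero.mpr hA
  have hB1 : μ ^ b - 1 ≠ 0 := sub_ne_zero.mpr hB
  have hC1 : μ ^ (a*b) - 1 ≠ 0 := sub_ne_zero.mpr hC
  -- closed forms
  have hPa : (∑ x ∈ Finset.range b, (μ^a) ^ x) = (μ^(a*b) - 1)/(μ^a - 1) := by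
    rw [geom_sum_eq hA, ← pow_mul]
  have hPb : (∑ y ∈ Finset.range a, (μ^b) ^ y) = (μ^(a*b) - 1)/(μ^b - 1) := by
    rw [geom_sum_eq hB, ← pow_mul, mul_comm b a]
  have hG0 : (∑ r ∈ Finset.range (a*b), μ ^ r) = (μ^(a*b) - 1)/(μ - 1) :=
    geom_sum_eq hμ _
  have hQa : (∑ x ∈ Finset.range b, (x:ℂ) * (μ^a) ^ x)
      = (((b:ℂ) - 1) * (μ^(a*b) * μ^a) - (b:ℂ) * μ^(a*b) + μ^a) / (μ^a - 1)^2 := by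
    rw [eq_div_iff (pow_ne_zero 2 hA1), wss_wgeom]
    rw [pow_succ, ← pow_mul]
  have hQb : (∑ y ∈ Finset.range a, (y:ℂ) * (μ^b) ^ y)
      = (((a:ℂ) - 1) * (μ^(a*b) * μ^b) - (a:ℂ) * μ^(a*b) + μ^b) / (μ^b - 1)^2 := by
    rw [eq_div_iff (pow_ne_zero 2 hB1), wss_wgeom]
    rw [pow_succ, ← pow_mul, mul_comm a b]
  have hG1 : (∑ r ∈ Finset.range (a*b), (r:ℂ) * μ ^ r)
      = (((a:ℂ) * (b:ℂ) - 1) * (μ^(a*b) * μ) - (a:ℂ) * (b:ℂ) * μ^(a*b) + μ) / (μ - 1)^2 := by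
    rw [eq_div_iff (pow_ne_zero 2 hμ1), wss_wgeom]
    rw [pow_succ]
    push_cast
    ring
  -- equation E1
  have e1 : (∑ x ∈ Finset.range b, (μ^a) ^ x) * (∑ y ∈ Finset.range a, (μ^b) ^ y)
      = (∑ r ∈ Finset.range (a*b), μ ^ r)
        + (μ^(a*b) - 1) * (∑ n ∈ NRF a b, μ ^ n) := by
    have ecomb := wss_comb ha hb hgcd (fun n => μ ^ n)
    rw [Finset.sum_mul_sum]
    calc ∑ x ∈ Finset.range b, ∑ y ∈ Finset.range a, (μ^a) ^ x * (μ^b) ^ y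
        = ∑ x ∈ Finset.range b, ∑ y ∈ Finset.range a, μ ^ (a*x + b*y) := by
          apply Finset.sum_congr rfl; intro x _
          apply Finset.sum_congr rfl; intro y _
          rw [pow_add, pow_mul, pow_mul]
      _ = (∑ r ∈ Finset.range (a*b), μ ^ r)
            + ∑ n ∈ NRF a b, (μ ^ (n + a*b) - μ ^ n) := ecomb
      _ = (∑ r ∈ Finset.range (a*b), μ ^ r)
            + (μ^(a*b) - 1) * (∑ n ∈ NRF a b, μ ^ n) := by
          rw [Finset.mul_sum]
          congr 1
          apply Finset.sum_congr rfl; intro n _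
          rw [pow_add]; ring
  -- equation E2
  have e2 : (a:ℂ) * ((∑ x ∈ Finset.range b, (x:ℂ) * (μ^a) ^ x) * (∑ y ∈ Finset.range a, (μ^b) ^ y))
      + (b:ℂ) * ((∑ x ∈ Finset.range b, (μ^a) ^ x) * (∑ y ∈ Finset.range a, (y:ℂ) * (μ^b) ^ y))
      = (∑ r ∈ Finset.range (a*b), (r:ℂ) * μ ^ r)
        + ((μ^(a*b) - 1) * (∑ n ∈ NRF a b, μ ^ n * (n:ℂ))
            + (a:ℂ) * (b:ℂ) * μ^(a*b) * (∑ n ∈ NRF a b, μ ^ n)) := by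
    have ecomb := wss_comb ha hb hgcd (fun n => μ ^ n * (n:ℂ))
    calc (a:ℂ) * ((∑ x ∈ Finset.range b, (x:ℂ) * (μ^a) ^ x) * (∑ y ∈ Finset.range a, (μ^b) ^ y))
      + (b:ℂ) * ((∑ x ∈ Finset.range b, (μ^a) ^ x) * (∑ y ∈ Finset.range a, (y:ℂ) * (μ^b) ^ y))
        = ∑ x ∈ Finset.range b, ∑ y ∈ Finset.range a, μ ^ (a*x + b*y) * ((a*x + b*y : ℕ):ℂ) := by
          rw [Finset.sum_mul_sum, Finset.sum_mul_sum, Finset.mul_sum, Finset.mul_sum,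
            ← Finset.sum_add_distrib]
          apply Finset.sum_congr rfl; intro x _
          rw [Finset.mul_sum, Finset.mul_sum, ← Finset.sum_add_distrib]
          apply Finset.sum_congr rfl; intro y _
          rw [pow_add, pow_mul, pow_mul]
          push_cast
          ring
      _ = (∑ r ∈ Finset.range (a*b), μ ^ r * (r:ℂ))
            + ∑ n ∈ NRF a b, (μ ^ (n + a*b) * ((n + a*b : ℕ):ℂ) - μ ^ n * (n:ℂ)) := ecomb
      _ = (∑ r ∈ Finset.range (a*b), (r:ℂ) * μ ^ r)
            + ((μ^(a*b) - 1) * (∑ n ∈ NRF a b, μ ^ n * (n:ℂ))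
                + (a:ℂ) * (b:ℂ) * μ^(a*b) * (∑ n ∈ NRF a b, μ ^ n)) := by
          congr 1
          · apply Finset.sum_congr rfl; intro r _; ring
          · rw [Finset.mul_sum, Finset.mul_sum, ← Finset.sum_add_distrib]
            apply Finset.sum_congr rfl; intro n _
            rw [pow_add]
            push_cast
            ring
  -- abbreviations
  rw [pow_add]
  set A := μ ^ a with hdefA
  set B := μ ^ b with hdefB
  set C := μ ^ (a*b) with hdefC
  set T := ∑ n ∈ NRF a b, μ ^ n * (n:ℂ) with hdefT
  set S := ∑ n ∈ NRF a b, μ ^ n with hdefS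
  set Pa := ∑ x ∈ Finset.range b, A ^ x with hdefPa
  set Pb := ∑ y ∈ Finset.range a, B ^ y with hdefPb
  set Qa := ∑ x ∈ Finset.range b, (x:ℂ) * A ^ x with hdefQa
  set Qb := ∑ y ∈ Finset.range a, (y:ℂ) * B ^ y with hdefQb
  set G0 := ∑ r ∈ Finset.range (a*b), μ ^ r with hdefG0
  set G1 := ∑ r ∈ Finset.range (a*b), (r:ℂ) * μ ^ r with hdefG1
  set α := (a:ℂ) with hdefα
  set β := (b:ℂ) with hdefβ
  -- cleared closed forms
  have F1 : Pa * (A - 1) = C - 1 := by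
    rw [hPa, div_mul_cancel₀ _ hA1]
  have F2 : Pb * (B - 1) = C - 1 := by
    rw [hPb, div_mul_cancel₀ _ hB1]
  have F3 : Qa * (A - 1)^2 = (β - 1) * (C * A) - β * C + A := by
    rw [hQa, div_mul_cancel₀ _ (pow_ne_zero 2 hA1)]
  have F4 : Qb * (B - 1)^2 = (α - 1) * (C * B) - α * C + B := by
    rw [hQb, div_mul_cancel₀ _ (pow_ne_zero 2 hB1)]
  have F5 : G0 * (μ - 1) = C - 1 := by
    rw [hG0, div_mul_cancel₀ _ hμ1]
  have F6 : G1 * (μ - 1)^2 = (α * β - 1) * (C * μ) - α * β * C + μ := by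
    rw [hG1, div_mul_cancel₀ _ (pow_ne_zero 2 hμ1)]
  -- eliminate S
  have e3 : (C-1) * (α*Qa*Pb + β*Pa*Qb)
      = (C-1)*G1 + (C-1)^2*T + α*β*C*(Pa*Pb - G0) := by
    linear_combination (C-1)*e2 - α*β*C*e1
  -- the main cleared identity
  have hC2 : ((C:ℂ)-1)^2 ≠ 0 := pow_ne_zero 2 hC1
  have main : ((C-1)^2) * (T * ((μ-1)^2*(A-1)^2*(B-1)^2))
      = ((C-1)^2) * (μ*(A-1)^2*(B-1)^2 + α*β*C*(μ-1)^2*(A-1)*(B-1)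
          - (C-1)*((α+β)*(A*B) - α*A - β*B)*(μ-1)^2) := by
    linear_combination (-((μ-1)^2*(A-1)^2*(B-1)^2)) * e3
      + (-((C-1)*(A-1)^2*(B-1)^2)) * F6
      + (α*β*C*(μ-1)*(A-1)^2*(B-1)^2) * F5
      + (-(α*β*C*(μ-1)^2*(A-1)*(B-1)^2*Pb)
          + β*(C-1)*(μ-1)^2*(A-1)*((α-1)*(C*B) - α*C + B)) * F1
      + (-(α*β*C*(μ-1)^2*(A-1)*(B-1)*(C-1))
          + α*(C-1)*(μ-1)^2*(B-1)*((β-1)*(C*A) - β*C + A)) * F2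
      + (α*(C-1)*(μ-1)^2*(B-1)^2*Pb) * F3
      + (β*(C-1)*(μ-1)^2*(A-1)^2*Pa) * F4
  have hmain : T * ((μ-1)^2*(A-1)^2*(B-1)^2)
      = μ*(A-1)^2*(B-1)^2 + α*β*C*(μ-1)^2*(A-1)*(B-1)
        - (C-1)*((α+β)*(A*B) - α*A - β*B)*(μ-1)^2 :=
    mul_left_cancel₀ hC2 main
  have hD : ((μ-1)^2*(A-1)^2*(B-1)^2 : ℂ) ≠ 0 := by
    apply mul_ne_zero (mul_ne_zero (pow_ne_zero 2 hμ1) (pow_ne_zero 2 hA1)) (pow_ne_zero 2 hB1)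
  have expand : μ/(μ-1)^2 + α*β*C/((A-1)*(B-1))
      - (C-1)*((α+β)*(A*B) - α*A - β*B)/((A-1)^2*(B-1)^2)
      = (μ*(A-1)^2*(B-1)^2 + α*β*C*(μ-1)^2*(A-1)*(B-1)
          - (C-1)*((α+β)*(A*B) - α*A - β*B)*(μ-1)^2) / ((μ-1)^2*(A-1)^2*(B-1)^2) := by
    field_simp
  rw [expand, eq_div_iff hD]
  exact hmain

/-- weighted Sylvester sum in two variables, for `λ ≠ 0`, `λ^a ≠ 1`, `λ^b ≠ 1`. -/
theorem weighted_sylvester_sum_two_variables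
    (a b : ℕ) (ha : 0 < a) (hb : 0 < b) (hgcd : Nat.gcd a b = 1)
    (lam : ℂ) (hlam0 : lam ≠ 0) (hlama : lam ^ a ≠ 1) (hlamb : lam ^ b ≠ 1) :
    ∑ᶠ n ∈ {n : ℕ | 0 < n ∧ ¬∃ x y : ℕ, n = a * x + b * y}, lam ^ n * (n : ℂ) =
      lam / (lam - 1) ^ 2
        + (a : ℂ) * (b : ℂ) * lam ^ (a * b) / ((lam ^ a - 1) * (lam ^ b - 1))
        - (lam ^ (a * b) - 1) *
            (((a : ℂ) + (b : ℂ)) * lam ^ (a + b) - (a : ℂ) * lam ^ a - (b : ℂ) * lam ^ b) /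
            ((lam ^ a - 1) ^ 2 * (lam ^ b - 1) ^ 2) := by
  classical
  have hset : {n : ℕ | 0 < n ∧ ¬∃ x y : ℕ, n = a * x + b * y} = ↑(NRF a b) := by
    ext n
    simp only [Set.mem_setOf_eq, NRF, Finset.coe_filter, Finset.mem_range]
    constructor
    · rintro ⟨hpos, hnrep⟩
      refine ⟨?_, hpos, hnrep⟩
      by_contra hge
      exact hnrep (wss_big ha hb hgcd (le_of_not_gt hge))
    · rintro ⟨_, h⟩; exact h
  rw [hset, finsum_mem_coe_finset]
  by_cases hC : lam ^ (a*b) = 1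
  · -- degenerate case: approach along t * lam, t > 1
    set F : ℂ → ℂ := fun μ => (∑ n ∈ NRF a b, μ ^ n * (n:ℂ)) -
      (μ / (μ - 1) ^ 2
        + (a : ℂ) * (b : ℂ) * μ ^ (a * b) / ((μ ^ a - 1) * (μ ^ b - 1))
        - (μ ^ (a * b) - 1) *
            (((a : ℂ) + (b : ℂ)) * μ ^ (a + b) - (a : ℂ) * μ ^ a - (b : ℂ) * μ ^ b) /
            ((μ ^ a - 1) ^ 2 * (μ ^ b - 1) ^ 2)) with hFdef
    have hμ : lam ≠ 1 := by rintro rfl; exact hlama (one_pow a)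
    have hμ1 : lam - 1 ≠ 0 := sub_ne_zero.mpr hμ
    have hA1 : lam ^ a - 1 ≠ 0 := sub_ne_zero.mpr hlama
    have hB1 : lam ^ b - 1 ≠ 0 := sub_ne_zero.mpr hlamb
    suffices hF0 : F lam = 0 by
      have := sub_eq_zero.mp hF0
      simpa [hFdef] using this
    -- |lam| = 1
    have hnl : ‖lam‖ = 1 := by
      have h1 : ‖lam‖ ^ (a*b) = 1 := by
        rw [← norm_pow, hC, norm_one]
      have hnn : 0 ≤ ‖lam‖ := norm_nonneg lam
      rcases lt_trichotomy ‖lam‖ 1 with h | h | h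
      · have := pow_lt_one₀ hnn h (Nat.mul_ne_zero ha.ne' hb.ne')
        rw [h1] at this; exact absurd this (lt_irrefl _)
      · exact h
      · have := one_lt_pow₀ h (Nat.mul_ne_zero ha.ne' hb.ne')
        rw [h1] at this; exact absurd this (lt_irrefl _)
    have habs : ∀ t : ℝ, 1 < t → ∀ n : ℕ, n ≠ 0 → ((t:ℂ) * lam) ^ n ≠ 1 := by
      intro t ht n hn h
      have h2 : ‖((t:ℂ) * lam) ^ n‖ = 1 := by rw [h, norm_one]
      rw [norm_pow, norm_mul, Complex.norm_real, hnl, mul_one, Real.norm_eq_abs,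
        abs_of_pos (by linarith : (0:ℝ) < t)] at h2
      have h3 : (1:ℝ) < t ^ n := one_lt_pow₀ ht hn
      rw [h2] at h3; exact absurd h3 (lt_irrefl _)
    have hev : ∀ t : ℝ, t ∈ Set.Ioi (1:ℝ) → F ((t:ℂ) * lam) = 0 := by
      intro t ht
      have hkey := wss_key ha hb hgcd ((t:ℂ) * lam)
        (habs t ht a ha.ne') (habs t ht b hb.ne')
        (habs t ht (a*b) (Nat.mul_ne_zero ha.ne' hb.ne'))
      rw [hFdef]
      exact sub_eq_zero.mpr hkey
    -- continuity of F at lam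
    have hc : ContinuousAt F lam := by
      rw [hFdef]
      apply ContinuousAt.sub
      · exact (continuous_finset_sum _ (fun n _ =>
          (continuous_pow n).mul continuous_const)).continuousAt
      · apply ContinuousAt.sub
        · apply ContinuousAt.add
          · exact ContinuousAt.div continuousAt_id
              (((continuousAt_id).sub continuousAt_const).pow 2) (pow_ne_zero 2 hμ1)
          · exact ContinuousAt.div
              (continuousAt_const.mul (continuousAt_pow _ _))
              ((((continuousAt_pow _ _)).sub continuousAt_const).mul
                (((continuousAt_pow _ _)).sub continuousAt_const))
              (mul_ne_zero hA1 hB1)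
        · exact ContinuousAt.div
            ((by fun_prop : Continuous fun μ : ℂ => (μ ^ (a*b) - 1) *
              (((a:ℂ)+(b:ℂ)) * μ ^ (a+b) - (a:ℂ) * μ ^ a - (b:ℂ) * μ ^ b)).continuousAt)
            ((by fun_prop : Continuous fun μ : ℂ =>
              (μ ^ a - 1) ^ 2 * (μ ^ b - 1) ^ 2).continuousAt)
            (mul_ne_zero (pow_ne_zero 2 hA1) (pow_ne_zero 2 hB1))
    have hg : Filter.Tendsto (fun t : ℝ => (t:ℂ) * lam) (nhdsWithin 1 (Set.Ioi 1)) (nhds lam) := by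
      have hcont : Continuous (fun t : ℝ => (t:ℂ) * lam) :=
        Complex.continuous_ofReal.mul continuous_const
      have h2 := hcont.tendsto 1
      rw [Complex.ofReal_one, one_mul] at h2
      exact h2.mono_left nhdsWithin_le_nhds
    have h3 : Filter.Tendsto (fun t : ℝ => F ((t:ℂ) * lam)) (nhdsWithin 1 (Set.Ioi 1))
        (nhds (F lam)) := hc.tendsto.comp hg
    have h4 : Filter.Tendsto (fun t : ℝ => F ((t:ℂ) * lam)) (nhdsWithin 1 (Set.Ioi 1))
        (nhds 0) := by
      have heq : (fun t : ℝ => F ((t:ℂ) * lam)) =ᶠ[nhdsWithin 1 (Set.Ioi 1)] (fun _ => 0) := by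
        filter_upwards [self_mem_nhdsWithin] with t ht
        exact hev t ht
      exact (Filter.tendsto_congr' heq).mpr tendsto_const_nhds
    exact tendsto_nhds_unique h3 h4
  · exact wss_key ha hb hgcd lam hlama hlamb hC
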